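/- Let F = {F_1,...,F_k} be a set of mutually orthogonal binary frequency squares of order n, let C be a nonempty set of cells, and for each i set C_i = C if F_i agrees with F_1 on every cell of C or disagrees with F_1 on every cell of C, else C_i = ∅. Then complementing the entries of F_i on C_i for every i yields another set of mutually orthogonal frequency squares if and only if (1) every row and column of F_1 contains equally many zeros and ones among the cells of C, and (2) for every j with C_j = ∅, the number of cells of C where F_1 = 1 and F_j = 1 equals the number where F_1 = 0 and F_j = 1. -/
import Mathlib

section S17aux
open Finset

namespace S17

lemma two_cases (v : Fin 2) : v = 0 ∨ v = 1 := by revert v; decide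

lemma decomp {α : Type*} [Fintype α] [DecidableEq α] (m q qin qout : α → Prop)
    [DecidablePred m] [DecidablePred q] [DecidablePred qin] [DecidablePred qout]
    (hin : ∀ x, m x → (q x ↔ qin x)) (hout : ∀ x, ¬ m x → (q x ↔ qout x)) :
    (univ.filter q).card =
      (univ.filter fun x => m x ∧ qin x).card +
      (univ.filter fun x => ¬ m x ∧ qout x).card := by
  rw [← card_union_of_disjoint]
  · congr 1; ext x
    simp only [mem_union, mem_filter, mem_univ, true_and]
    by_cases hm : m x
    · simp [hm, hin x hm]
    · simp [hm, hout x hm]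
  · rw [disjoint_left]; intro x hx hx'
    simp only [mem_filter] at hx hx'; exact hx'.2.1 hx.2.1

lemma memfilter {α : Type*} [Fintype α] (S : Finset α) (q : α → Prop)
    [DecidableEq α] [DecidablePred q] :
    (univ.filter fun x => x ∈ S ∧ q x) = S.filter q := by
  ext x; simp [mem_filter]

variable {n : ℕ}

lemma decompC (C : Finset (Fin n × Fin n)) (q qin qout : Fin n × Fin n → Prop)
    [DecidablePred q] [DecidablePred qin] [DecidablePred qout]
    (hin : ∀ p ∈ C, (q p ↔ qin p)) (hout : ∀ p ∉ C, (q p ↔ qout p)) :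
    (univ.filter q).card =
      (C.filter qin).card + (univ.filter fun p => p ∉ C ∧ qout p).card := by
  rw [decomp (fun p => p ∈ C) q qin qout hin hout, memfilter]

lemma row_count (C : Finset (Fin n × Fin n)) (r : Fin n)
    (q : Fin n × Fin n → Prop) [DecidablePred q] :
    (univ.filter fun c => (r, c) ∈ C ∧ q (r, c)).card =
      (C.filter fun p => p.1 = r ∧ q p).card := by
  apply Finset.card_bij (fun c _ => (r, c))
  · intro c hc; simp only [mem_filter, mem_univ, true_and] at hc
    exact mem_filter.mpr ⟨hc.1, rfl, hc.2⟩
  · intro c₁ h₁ c₂ h₂ h; exact congrArg Prod.snd h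
  · intro p hp; simp only [mem_filter, mem_univ, true_and] at hp
    obtain ⟨hpC, hp1, hq⟩ := hp
    subst hp1
    exact ⟨p.2, by simp only [mem_filter, mem_univ, true_and]; exact ⟨hpC, hq⟩, rfl⟩

lemma col_count (C : Finset (Fin n × Fin n)) (c : Fin n)
    (q : Fin n × Fin n → Prop) [DecidablePred q] :
    (univ.filter fun r => (r, c) ∈ C ∧ q (r, c)).card =
      (C.filter fun p => p.2 = c ∧ q p).card := by
  apply Finset.card_bij (fun r _ => (r, c))
  · intro r hr; simp only [mem_filter, mem_univ, true_and] at hr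
    exact mem_filter.mpr ⟨hr.1, rfl, hr.2⟩
  · intro r₁ h₁ r₂ h₂ h; exact congrArg Prod.fst h
  · intro p hp; simp only [mem_filter, mem_univ, true_and] at hp
    obtain ⟨hpC, hp2, hq⟩ := hp
    subst hp2
    exact ⟨p.1, by simp only [mem_filter, mem_univ, true_and]; exact ⟨hpC, hq⟩, rfl⟩

lemma fiber_sum (C : Finset (Fin n × Fin n)) (q : Fin n × Fin n → Prop)
    [DecidablePred q] :
    (C.filter q).card = ∑ r : Fin n, (C.filter fun p => p.1 = r ∧ q p).card := by
  rw [Finset.card_eq_sum_card_fiberwise (f := Prod.fst) (t := univ)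
    (fun x _ => mem_univ _)]
  refine Finset.sum_congr rfl fun r _ => ?_
  rw [Finset.filter_filter]
  congr 1; ext p; simp only [mem_filter]; tauto

lemma split_pred (C : Finset (Fin n × Fin n)) (q : Fin n × Fin n → Prop)
    [DecidablePred q] (w : Fin n × Fin n → Fin 2) :
    (C.filter fun p => q p ∧ w p = 0).card + (C.filter fun p => q p ∧ w p = 1).card
      = (C.filter q).card := by
  rw [← card_union_of_disjoint]
  · congr 1; ext p
    simp only [mem_union, mem_filter]
    rcases two_cases (w p) with h | h <;> simp [h]
  · rw [disjoint_left]; intro p hp hp'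
    simp only [mem_filter] at hp hp'
    rw [hp.2.2] at hp'; exact absurd hp'.2.2 (by decide)

end S17
end S17aux


/-- A binary frequency square of type F(n; n/2): an n×n {0,1}-matrix with
exactly n/2 ones in every row and every column. -/
def IsFreqSquare (n : ℕ) (F : Fin n → Fin n → Fin 2) : Prop :=
  (∀ r : Fin n, (Finset.univ.filter fun c => F r c = 1).card = n / 2) ∧
  (∀ c : Fin n, (Finset.univ.filter fun r => F r c = 1).card = n / 2)

/-- Two binary frequency squares are orthogonal if each ordered pair of symbols
occurs exactly n^2/4 times when the squares are superimposed. -/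
def OrthFS (n : ℕ) (F G : Fin n → Fin n → Fin 2) : Prop :=
  ∀ a b : Fin 2,
    (Finset.univ.filter fun p : Fin n × Fin n =>
      F p.1 p.2 = a ∧ G p.1 p.2 = b).card = n ^ 2 / 4

/-- A set of k mutually orthogonal binary frequency squares of order n. -/
def IsMOFS (n k : ℕ) (F : Fin k → Fin n → Fin n → Fin 2) : Prop :=
  (∀ i, IsFreqSquare n (F i)) ∧ ∀ i j, i ≠ j → OrthFS n (F i) (F j)

/-- Switching a basic trade: given a distinguished square F_{i0} and a set of
cells C, complement the entries on C in every square that agrees with F_{i0}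
on all of C or disagrees with F_{i0} on all of C. -/
def switchOn (n k : ℕ) (F : Fin k → Fin n → Fin n → Fin 2) (i0 : Fin k)
    (C : Finset (Fin n × Fin n)) : Fin k → Fin n → Fin n → Fin 2 :=
  fun i r c =>
    if ((∀ p ∈ C, F i p.1 p.2 = F i0 p.1 p.2) ∨
        (∀ p ∈ C, F i p.1 p.2 ≠ F i0 p.1 p.2)) ∧ (r, c) ∈ C
    then 1 - F i r c else F i r c

/-- Characterisation of basic trades: switching the cells of a nonempty set C
(in every square agreeing or disagreeing with F_1 on all of C) again yields a
set of MOFS if and only if (1) each row and each column of F_1 contains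
equally many zeros and ones among the cells of C, and (2) for every square
F_j that is left unswitched, the number of cells of C with F_1 = 1 and
F_j = 1 equals the number with F_1 = 0 and F_j = 1. -/
theorem stmt_17 (n k : ℕ) (hk : 0 < k)
    (F : Fin k → Fin n → Fin n → Fin 2)
    (hmofs : IsMOFS n k F)
    (C : Finset (Fin n × Fin n)) (hC : C.Nonempty) :
    IsMOFS n k (switchOn n k F ⟨0, hk⟩ C) ↔
      ((∀ r : Fin n,
        (C.filter fun p => p.1 = r ∧ F ⟨0, hk⟩ p.1 p.2 = 0).card =
        (C.filter fun p => p.1 = r ∧ F ⟨0, hk⟩ p.1 p.2 = 1).card) ∧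
       (∀ c : Fin n,
        (C.filter fun p => p.2 = c ∧ F ⟨0, hk⟩ p.1 p.2 = 0).card =
        (C.filter fun p => p.2 = c ∧ F ⟨0, hk⟩ p.1 p.2 = 1).card) ∧
       (∀ j : Fin k,
        ¬ ((∀ p ∈ C, F j p.1 p.2 = F ⟨0, hk⟩ p.1 p.2) ∨
           (∀ p ∈ C, F j p.1 p.2 ≠ F ⟨0, hk⟩ p.1 p.2)) →
        (C.filter fun p => F ⟨0, hk⟩ p.1 p.2 = 1 ∧ F j p.1 p.2 = 1).card =
        (C.filter fun p => F ⟨0, hk⟩ p.1 p.2 = 0 ∧ F j p.1 p.2 = 1).card)) := by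
  have two := S17.two_cases
  have f2a : ∀ x y : Fin 2, (1 - x = y ↔ x = 1 - y) := by decide
  have f2one : ∀ x : Fin 2, (1 - x = 1 ↔ x = 0) := by decide
  have fadd : ∀ e x y : Fin 2, (e + x = y ↔ x = y - e) := by decide
  have hP0 : ((∀ p ∈ C, F ⟨0, hk⟩ p.1 p.2 = F ⟨0, hk⟩ p.1 p.2) ∨
      (∀ p ∈ C, F ⟨0, hk⟩ p.1 p.2 ≠ F ⟨0, hk⟩ p.1 p.2)) := Or.inl fun _ _ => rfl
  have hGin : ∀ i, ((∀ p ∈ C, F i p.1 p.2 = F ⟨0, hk⟩ p.1 p.2) ∨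
      (∀ p ∈ C, F i p.1 p.2 ≠ F ⟨0, hk⟩ p.1 p.2)) → ∀ r c, (r, c) ∈ C →
      switchOn n k F ⟨0, hk⟩ C i r c = 1 - F i r c := by
    intro i hPi r c hrc; unfold switchOn; rw [if_pos ⟨hPi, hrc⟩]
  have hGout : ∀ i r c, (r, c) ∉ C → switchOn n k F ⟨0, hk⟩ C i r c = F i r c := by
    intro i r c hrc; unfold switchOn; rw [if_neg (fun h => hrc h.2)]
  have hGid : ∀ i, ¬ ((∀ p ∈ C, F i p.1 p.2 = F ⟨0, hk⟩ p.1 p.2) ∨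
      (∀ p ∈ C, F i p.1 p.2 ≠ F ⟨0, hk⟩ p.1 p.2)) → ∀ r c,
      switchOn n k F ⟨0, hk⟩ C i r c = F i r c := by
    intro i hPi r c; unfold switchOn; rw [if_neg (fun h => hPi h.1)]
  have sign : ∀ i, ((∀ p ∈ C, F i p.1 p.2 = F ⟨0, hk⟩ p.1 p.2) ∨
      (∀ p ∈ C, F i p.1 p.2 ≠ F ⟨0, hk⟩ p.1 p.2)) →
      ∃ e : Fin 2, ∀ p ∈ C, F i p.1 p.2 = e + F ⟨0, hk⟩ p.1 p.2 := by
    intro i hPi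
    have fact : ∀ x y : Fin 2, x ≠ y → x = 1 + y := by decide
    rcases hPi with h | h
    · exact ⟨0, fun p hp => by rw [h p hp, zero_add]⟩
    · exact ⟨1, fun p hp => fact _ _ (h p hp)⟩
  constructor
  · -- forward
    intro hG
    refine ⟨?_, ?_, ?_⟩
    · -- rows
      intro r
      have d1 : (Finset.univ.filter fun c => switchOn n k F ⟨0, hk⟩ C ⟨0, hk⟩ r c = 1).card =
          (Finset.univ.filter fun c => (r, c) ∈ C ∧ F ⟨0, hk⟩ r c = 0).card +
          (Finset.univ.filter fun c => ¬((r, c) ∈ C) ∧ F ⟨0, hk⟩ r c = 1).card := by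
        refine S17.decomp _ _ _ _ ?_ ?_
        · intro c hc; simp only [hGin _ hP0 r c hc]; exact f2one _
        · intro c hc; simp only [hGout _ r c hc]
      have d2 : (Finset.univ.filter fun c => F ⟨0, hk⟩ r c = 1).card =
          (Finset.univ.filter fun c => (r, c) ∈ C ∧ F ⟨0, hk⟩ r c = 1).card +
          (Finset.univ.filter fun c => ¬((r, c) ∈ C) ∧ F ⟨0, hk⟩ r c = 1).card :=
        S17.decomp _ _ _ _ (fun _ _ => Iff.rfl) (fun _ _ => Iff.rfl)
      have r0 : (Finset.univ.filter fun c => (r, c) ∈ C ∧ F ⟨0, hk⟩ r c = 0).card =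
          (C.filter fun p => p.1 = r ∧ F ⟨0, hk⟩ p.1 p.2 = 0).card :=
        S17.row_count C r (fun p => F ⟨0, hk⟩ p.1 p.2 = 0)
      have r1 : (Finset.univ.filter fun c => (r, c) ∈ C ∧ F ⟨0, hk⟩ r c = 1).card =
          (C.filter fun p => p.1 = r ∧ F ⟨0, hk⟩ p.1 p.2 = 1).card :=
        S17.row_count C r (fun p => F ⟨0, hk⟩ p.1 p.2 = 1)
      have e1 := (hG.1 ⟨0, hk⟩).1 r
      have e2 := (hmofs.1 ⟨0, hk⟩).1 r
      omega
    · -- columns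
      intro c
      have d1 : (Finset.univ.filter fun r => switchOn n k F ⟨0, hk⟩ C ⟨0, hk⟩ r c = 1).card =
          (Finset.univ.filter fun r => (r, c) ∈ C ∧ F ⟨0, hk⟩ r c = 0).card +
          (Finset.univ.filter fun r => ¬((r, c) ∈ C) ∧ F ⟨0, hk⟩ r c = 1).card := by
        refine S17.decomp _ _ _ _ ?_ ?_
        · intro r hr; simp only [hGin _ hP0 r c hr]; exact f2one _
        · intro r hr; simp only [hGout _ r c hr]
      have d2 : (Finset.univ.filter fun r => F ⟨0, hk⟩ r c = 1).card =
          (Finset.univ.filter fun r => (r, c) ∈ C ∧ F ⟨0, hk⟩ r c = 1).card +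
          (Finset.univ.filter fun r => ¬((r, c) ∈ C) ∧ F ⟨0, hk⟩ r c = 1).card :=
        S17.decomp _ _ _ _ (fun _ _ => Iff.rfl) (fun _ _ => Iff.rfl)
      have r0 : (Finset.univ.filter fun r => (r, c) ∈ C ∧ F ⟨0, hk⟩ r c = 0).card =
          (C.filter fun p => p.2 = c ∧ F ⟨0, hk⟩ p.1 p.2 = 0).card :=
        S17.col_count C c (fun p => F ⟨0, hk⟩ p.1 p.2 = 0)
      have r1 : (Finset.univ.filter fun r => (r, c) ∈ C ∧ F ⟨0, hk⟩ r c = 1).card =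
          (C.filter fun p => p.2 = c ∧ F ⟨0, hk⟩ p.1 p.2 = 1).card :=
        S17.col_count C c (fun p => F ⟨0, hk⟩ p.1 p.2 = 1)
      have e1 := (hG.1 ⟨0, hk⟩).2 c
      have e2 := (hmofs.1 ⟨0, hk⟩).2 c
      omega
    · -- condition (3)
      intro j hPj
      have hne : (⟨0, hk⟩ : Fin k) ≠ j := fun h => hPj (Or.inl fun p _ => by rw [← h])
      have e1 := hG.2 ⟨0, hk⟩ j hne 1 1
      have e2 := hmofs.2 ⟨0, hk⟩ j hne 1 1
      have d1 : (Finset.univ.filter fun p : Fin n × Fin n =>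
            switchOn n k F ⟨0, hk⟩ C ⟨0, hk⟩ p.1 p.2 = 1 ∧
            switchOn n k F ⟨0, hk⟩ C j p.1 p.2 = 1).card =
          (C.filter fun p => F ⟨0, hk⟩ p.1 p.2 = 0 ∧ F j p.1 p.2 = 1).card +
          (Finset.univ.filter fun p : Fin n × Fin n =>
            p ∉ C ∧ (F ⟨0, hk⟩ p.1 p.2 = 1 ∧ F j p.1 p.2 = 1)).card := by
        refine S17.decompC _ _ _ _ ?_ ?_
        · intro p hp
          simp only [hGin _ hP0 p.1 p.2 hp, hGid j hPj p.1 p.2]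
          exact and_congr_left' (f2one _)
        · intro p hp
          simp only [hGout _ p.1 p.2 hp, hGid j hPj p.1 p.2]
      have d2 : (Finset.univ.filter fun p : Fin n × Fin n =>
            F ⟨0, hk⟩ p.1 p.2 = 1 ∧ F j p.1 p.2 = 1).card =
          (C.filter fun p => F ⟨0, hk⟩ p.1 p.2 = 1 ∧ F j p.1 p.2 = 1).card +
          (Finset.univ.filter fun p : Fin n × Fin n =>
            p ∉ C ∧ (F ⟨0, hk⟩ p.1 p.2 = 1 ∧ F j p.1 p.2 = 1)).card :=
        S17.decompC _ _ _ _ (fun _ _ => Iff.rfl) (fun _ _ => Iff.rfl)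
      omega
  · -- backward
    rintro ⟨h1, h2, h3⟩
    have hbal : (C.filter fun p => F ⟨0, hk⟩ p.1 p.2 = 0).card =
        (C.filter fun p => F ⟨0, hk⟩ p.1 p.2 = 1).card := by
      rw [S17.fiber_sum, S17.fiber_sum]
      exact Finset.sum_congr rfl fun r _ => h1 r
    have gbal : ∀ v : Fin 2, (C.filter fun p => F ⟨0, hk⟩ p.1 p.2 = v).card =
        (C.filter fun p => F ⟨0, hk⟩ p.1 p.2 = 1 + v).card := by
      intro v; rcases two v with rfl | rfl
      · simp only [show (1 : Fin 2) + 0 = 1 from by decide]; exact hbal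
      · simp only [show (1 : Fin 2) + 1 = 0 from by decide]; exact hbal.symm
    have key : ∀ j, ¬ ((∀ p ∈ C, F j p.1 p.2 = F ⟨0, hk⟩ p.1 p.2) ∨
        (∀ p ∈ C, F j p.1 p.2 ≠ F ⟨0, hk⟩ p.1 p.2)) →
        ∀ b v w : Fin 2,
        (C.filter fun p => F ⟨0, hk⟩ p.1 p.2 = v ∧ F j p.1 p.2 = b).card =
        (C.filter fun p => F ⟨0, hk⟩ p.1 p.2 = w ∧ F j p.1 p.2 = b).card := by
      intro j hPj
      have e11 := h3 j hPj
      have s0 : (C.filter fun p => F ⟨0, hk⟩ p.1 p.2 = 0 ∧ F j p.1 p.2 = 0).card +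
          (C.filter fun p => F ⟨0, hk⟩ p.1 p.2 = 0 ∧ F j p.1 p.2 = 1).card =
          (C.filter fun p => F ⟨0, hk⟩ p.1 p.2 = 0).card :=
        S17.split_pred C _ _
      have s1 : (C.filter fun p => F ⟨0, hk⟩ p.1 p.2 = 1 ∧ F j p.1 p.2 = 0).card +
          (C.filter fun p => F ⟨0, hk⟩ p.1 p.2 = 1 ∧ F j p.1 p.2 = 1).card =
          (C.filter fun p => F ⟨0, hk⟩ p.1 p.2 = 1).card :=
        S17.split_pred C _ _
      intro b v w
      rcases two b with rfl | rfl <;> rcases two v with rfl | rfl <;>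
        rcases two w with rfl | rfl <;> omega
    have pair_eq : ∀ v w : Fin 2,
        (C.filter fun p => F ⟨0, hk⟩ p.1 p.2 = v ∧ F ⟨0, hk⟩ p.1 p.2 = w).card =
        (C.filter fun p => F ⟨0, hk⟩ p.1 p.2 = 1 + v ∧ F ⟨0, hk⟩ p.1 p.2 = 1 + w).card := by
      intro v w
      by_cases hvw : v = w
      · subst hvw
        have t : (C.filter fun p => F ⟨0, hk⟩ p.1 p.2 = v ∧ F ⟨0, hk⟩ p.1 p.2 = v) =
            (C.filter fun p => F ⟨0, hk⟩ p.1 p.2 = v) :=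
          Finset.filter_congr fun p _ => and_self_iff
        have t' : (C.filter fun p => F ⟨0, hk⟩ p.1 p.2 = 1 + v ∧ F ⟨0, hk⟩ p.1 p.2 = 1 + v) =
            (C.filter fun p => F ⟨0, hk⟩ p.1 p.2 = 1 + v) :=
          Finset.filter_congr fun p _ => and_self_iff
        rw [t, t']; exact gbal v
      · have hvw' : (1 : Fin 2) + v ≠ 1 + w := by
          have : ∀ v w : Fin 2, v ≠ w → (1 + v ≠ 1 + w) := by decide
          exact this v w hvw
        have t : (C.filter fun p => F ⟨0, hk⟩ p.1 p.2 = v ∧ F ⟨0, hk⟩ p.1 p.2 = w) = ∅ :=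
          Finset.filter_eq_empty_iff.mpr fun p _ h => hvw (h.1.symm.trans h.2)
        have t' : (C.filter fun p => F ⟨0, hk⟩ p.1 p.2 = 1 + v ∧ F ⟨0, hk⟩ p.1 p.2 = 1 + w) = ∅ :=
          Finset.filter_eq_empty_iff.mpr fun p _ h => hvw' (h.1.symm.trans h.2)
        rw [t, t']
    constructor
    · -- frequency squares
      intro i
      by_cases hPi : ((∀ p ∈ C, F i p.1 p.2 = F ⟨0, hk⟩ p.1 p.2) ∨
          (∀ p ∈ C, F i p.1 p.2 ≠ F ⟨0, hk⟩ p.1 p.2))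
      · obtain ⟨e, he⟩ := sign i hPi
        constructor
        · intro r
          have d1 : (Finset.univ.filter fun c => switchOn n k F ⟨0, hk⟩ C i r c = 1).card =
              (Finset.univ.filter fun c => (r, c) ∈ C ∧ F i r c = 0).card +
              (Finset.univ.filter fun c => ¬((r, c) ∈ C) ∧ F i r c = 1).card := by
            refine S17.decomp _ _ _ _ ?_ ?_
            · intro c hc; simp only [hGin _ hPi r c hc]; exact f2one _
            · intro c hc; simp only [hGout _ r c hc]
          have d2 : (Finset.univ.filter fun c => F i r c = 1).card =
              (Finset.univ.filter fun c => (r, c) ∈ C ∧ F i r c = 1).card +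
              (Finset.univ.filter fun c => ¬((r, c) ∈ C) ∧ F i r c = 1).card :=
            S17.decomp _ _ _ _ (fun _ _ => Iff.rfl) (fun _ _ => Iff.rfl)
          have r0 : (Finset.univ.filter fun c => (r, c) ∈ C ∧ F i r c = 0).card =
              (C.filter fun p => p.1 = r ∧ F i p.1 p.2 = 0).card :=
            S17.row_count C r (fun p => F i p.1 p.2 = 0)
          have r1 : (Finset.univ.filter fun c => (r, c) ∈ C ∧ F i r c = 1).card =
              (C.filter fun p => p.1 = r ∧ F i p.1 p.2 = 1).card :=
            S17.row_count C r (fun p => F i p.1 p.2 = 1)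
          have hsw : (C.filter fun p => p.1 = r ∧ F i p.1 p.2 = 0).card =
              (C.filter fun p => p.1 = r ∧ F i p.1 p.2 = 1).card := by
            have t0 : (C.filter fun p => p.1 = r ∧ F i p.1 p.2 = 0) =
                (C.filter fun p => p.1 = r ∧ F ⟨0, hk⟩ p.1 p.2 = 0 - e) :=
              Finset.filter_congr fun p hp => by
                rw [he p hp]; exact and_congr_right fun _ => fadd e _ 0
            have t1 : (C.filter fun p => p.1 = r ∧ F i p.1 p.2 = 1) =
                (C.filter fun p => p.1 = r ∧ F ⟨0, hk⟩ p.1 p.2 = 1 - e) :=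
              Finset.filter_congr fun p hp => by
                rw [he p hp]; exact and_congr_right fun _ => fadd e _ 1
            rw [t0, t1]
            rcases two e with rfl | rfl
            · simp only [show (0 : Fin 2) - 0 = 0 from by decide,
                show (1 : Fin 2) - 0 = 1 from by decide]
              exact h1 r
            · simp only [show (0 : Fin 2) - 1 = 1 from by decide,
                show (1 : Fin 2) - 1 = 0 from by decide]
              exact (h1 r).symm
          have e2 := (hmofs.1 i).1 r
          omega
        · intro c
          have d1 : (Finset.univ.filter fun r => switchOn n k F ⟨0, hk⟩ C i r c = 1).card =
              (Finset.univ.filter fun r => (r, c) ∈ C ∧ F i r c = 0).card +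
              (Finset.univ.filter fun r => ¬((r, c) ∈ C) ∧ F i r c = 1).card := by
            refine S17.decomp _ _ _ _ ?_ ?_
            · intro r hr; simp only [hGin _ hPi r c hr]; exact f2one _
            · intro r hr; simp only [hGout _ r c hr]
          have d2 : (Finset.univ.filter fun r => F i r c = 1).card =
              (Finset.univ.filter fun r => (r, c) ∈ C ∧ F i r c = 1).card +
              (Finset.univ.filter fun r => ¬((r, c) ∈ C) ∧ F i r c = 1).card :=
            S17.decomp _ _ _ _ (fun _ _ => Iff.rfl) (fun _ _ => Iff.rfl)
          have r0 : (Finset.univ.filter fun r => (r, c) ∈ C ∧ F i r c = 0).card =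
              (C.filter fun p => p.2 = c ∧ F i p.1 p.2 = 0).card :=
            S17.col_count C c (fun p => F i p.1 p.2 = 0)
          have r1 : (Finset.univ.filter fun r => (r, c) ∈ C ∧ F i r c = 1).card =
              (C.filter fun p => p.2 = c ∧ F i p.1 p.2 = 1).card :=
            S17.col_count C c (fun p => F i p.1 p.2 = 1)
          have hsw : (C.filter fun p => p.2 = c ∧ F i p.1 p.2 = 0).card =
              (C.filter fun p => p.2 = c ∧ F i p.1 p.2 = 1).card := by
            have t0 : (C.filter fun p => p.2 = c ∧ F i p.1 p.2 = 0) =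
                (C.filter fun p => p.2 = c ∧ F ⟨0, hk⟩ p.1 p.2 = 0 - e) :=
              Finset.filter_congr fun p hp => by
                rw [he p hp]; exact and_congr_right fun _ => fadd e _ 0
            have t1 : (C.filter fun p => p.2 = c ∧ F i p.1 p.2 = 1) =
                (C.filter fun p => p.2 = c ∧ F ⟨0, hk⟩ p.1 p.2 = 1 - e) :=
              Finset.filter_congr fun p hp => by
                rw [he p hp]; exact and_congr_right fun _ => fadd e _ 1
            rw [t0, t1]
            rcases two e with rfl | rfl
            · simp only [show (0 : Fin 2) - 0 = 0 from by decide,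
                show (1 : Fin 2) - 0 = 1 from by decide]
              exact h2 c
            · simp only [show (0 : Fin 2) - 1 = 1 from by decide,
                show (1 : Fin 2) - 1 = 0 from by decide]
              exact (h2 c).symm
          have e2 := (hmofs.1 i).2 c
          omega
      · have hfun : switchOn n k F ⟨0, hk⟩ C i = F i :=
          funext fun r => funext fun c => hGid i hPi r c
        rw [hfun]; exact hmofs.1 i
    · -- orthogonality
      intro i j hij a b
      by_cases hPi : ((∀ p ∈ C, F i p.1 p.2 = F ⟨0, hk⟩ p.1 p.2) ∨
          (∀ p ∈ C, F i p.1 p.2 ≠ F ⟨0, hk⟩ p.1 p.2)) <;>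
      by_cases hPj : ((∀ p ∈ C, F j p.1 p.2 = F ⟨0, hk⟩ p.1 p.2) ∨
          (∀ p ∈ C, F j p.1 p.2 ≠ F ⟨0, hk⟩ p.1 p.2))
      · -- both switched
        obtain ⟨ei, hei⟩ := sign i hPi
        obtain ⟨ej, hej⟩ := sign j hPj
        have d1 : (Finset.univ.filter fun p : Fin n × Fin n =>
              switchOn n k F ⟨0, hk⟩ C i p.1 p.2 = a ∧
              switchOn n k F ⟨0, hk⟩ C j p.1 p.2 = b).card =
            (C.filter fun p => F i p.1 p.2 = 1 - a ∧ F j p.1 p.2 = 1 - b).card +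
            (Finset.univ.filter fun p : Fin n × Fin n =>
              p ∉ C ∧ (F i p.1 p.2 = a ∧ F j p.1 p.2 = b)).card := by
          refine S17.decompC _ _ _ _ ?_ ?_
          · intro p hp
            simp only [hGin _ hPi p.1 p.2 hp, hGin _ hPj p.1 p.2 hp]
            exact and_congr (f2a _ a) (f2a _ b)
          · intro p hp
            simp only [hGout _ p.1 p.2 hp]
        have d2 : (Finset.univ.filter fun p : Fin n × Fin n =>
              F i p.1 p.2 = a ∧ F j p.1 p.2 = b).card =
            (C.filter fun p => F i p.1 p.2 = a ∧ F j p.1 p.2 = b).card +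
            (Finset.univ.filter fun p : Fin n × Fin n =>
              p ∉ C ∧ (F i p.1 p.2 = a ∧ F j p.1 p.2 = b)).card :=
          S17.decompC _ _ _ _ (fun _ _ => Iff.rfl) (fun _ _ => Iff.rfl)
        have horig := hmofs.2 i j hij a b
        have hsw : (C.filter fun p => F i p.1 p.2 = 1 - a ∧ F j p.1 p.2 = 1 - b).card =
            (C.filter fun p => F i p.1 p.2 = a ∧ F j p.1 p.2 = b).card := by
          have t1 : (C.filter fun p => F i p.1 p.2 = 1 - a ∧ F j p.1 p.2 = 1 - b) =
              (C.filter fun p => F ⟨0, hk⟩ p.1 p.2 = (1 - a) - ei ∧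
                F ⟨0, hk⟩ p.1 p.2 = (1 - b) - ej) :=
            Finset.filter_congr fun p hp => by
              rw [hei p hp, hej p hp]; exact and_congr (fadd ei _ _) (fadd ej _ _)
          have t2 : (C.filter fun p => F i p.1 p.2 = a ∧ F j p.1 p.2 = b) =
              (C.filter fun p => F ⟨0, hk⟩ p.1 p.2 = a - ei ∧
                F ⟨0, hk⟩ p.1 p.2 = b - ej) :=
            Finset.filter_congr fun p hp => by
              rw [hei p hp, hej p hp]; exact and_congr (fadd ei _ _) (fadd ej _ _)
          rw [t1, t2]
          have hrw : ∀ x e : Fin 2, (1 - x) - e = 1 + (x - e) := by decide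
          rw [hrw a ei, hrw b ej]
          exact (pair_eq (a - ei) (b - ej)).symm
        omega
      · -- i switched, j not
        obtain ⟨ei, hei⟩ := sign i hPi
        have d1 : (Finset.univ.filter fun p : Fin n × Fin n =>
              switchOn n k F ⟨0, hk⟩ C i p.1 p.2 = a ∧
              switchOn n k F ⟨0, hk⟩ C j p.1 p.2 = b).card =
            (C.filter fun p => F i p.1 p.2 = 1 - a ∧ F j p.1 p.2 = b).card +
            (Finset.univ.filter fun p : Fin n × Fin n =>
              p ∉ C ∧ (F i p.1 p.2 = a ∧ F j p.1 p.2 = b)).card := by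
          refine S17.decompC _ _ _ _ ?_ ?_
          · intro p hp
            simp only [hGin _ hPi p.1 p.2 hp, hGid j hPj p.1 p.2]
            exact and_congr_left' (f2a _ a)
          · intro p hp
            simp only [hGout _ p.1 p.2 hp, hGid j hPj p.1 p.2]
        have d2 : (Finset.univ.filter fun p : Fin n × Fin n =>
              F i p.1 p.2 = a ∧ F j p.1 p.2 = b).card =
            (C.filter fun p => F i p.1 p.2 = a ∧ F j p.1 p.2 = b).card +
            (Finset.univ.filter fun p : Fin n × Fin n =>
              p ∉ C ∧ (F i p.1 p.2 = a ∧ F j p.1 p.2 = b)).card :=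
          S17.decompC _ _ _ _ (fun _ _ => Iff.rfl) (fun _ _ => Iff.rfl)
        have horig := hmofs.2 i j hij a b
        have hsw : (C.filter fun p => F i p.1 p.2 = 1 - a ∧ F j p.1 p.2 = b).card =
            (C.filter fun p => F i p.1 p.2 = a ∧ F j p.1 p.2 = b).card := by
          have t1 : (C.filter fun p => F i p.1 p.2 = 1 - a ∧ F j p.1 p.2 = b) =
              (C.filter fun p => F ⟨0, hk⟩ p.1 p.2 = (1 - a) - ei ∧ F j p.1 p.2 = b) :=
            Finset.filter_congr fun p hp => by
              rw [hei p hp]; exact and_congr_left' (fadd ei _ _)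
          have t2 : (C.filter fun p => F i p.1 p.2 = a ∧ F j p.1 p.2 = b) =
              (C.filter fun p => F ⟨0, hk⟩ p.1 p.2 = a - ei ∧ F j p.1 p.2 = b) :=
            Finset.filter_congr fun p hp => by
              rw [hei p hp]; exact and_congr_left' (fadd ei _ _)
          rw [t1, t2]
          exact key j hPj b ((1 - a) - ei) (a - ei)
        omega
      · -- j switched, i not
        obtain ⟨ej, hej⟩ := sign j hPj
        have d1 : (Finset.univ.filter fun p : Fin n × Fin n =>
              switchOn n k F ⟨0, hk⟩ C i p.1 p.2 = a ∧
              switchOn n k F ⟨0, hk⟩ C j p.1 p.2 = b).card =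
            (C.filter fun p => F i p.1 p.2 = a ∧ F j p.1 p.2 = 1 - b).card +
            (Finset.univ.filter fun p : Fin n × Fin n =>
              p ∉ C ∧ (F i p.1 p.2 = a ∧ F j p.1 p.2 = b)).card := by
          refine S17.decompC _ _ _ _ ?_ ?_
          · intro p hp
            simp only [hGid i hPi p.1 p.2, hGin _ hPj p.1 p.2 hp]
            exact and_congr_right' (f2a _ b)
          · intro p hp
            simp only [hGout _ p.1 p.2 hp, hGid i hPi p.1 p.2]
        have d2 : (Finset.univ.filter fun p : Fin n × Fin n =>
              F i p.1 p.2 = a ∧ F j p.1 p.2 = b).card =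
            (C.filter fun p => F i p.1 p.2 = a ∧ F j p.1 p.2 = b).card +
            (Finset.univ.filter fun p : Fin n × Fin n =>
              p ∉ C ∧ (F i p.1 p.2 = a ∧ F j p.1 p.2 = b)).card :=
          S17.decompC _ _ _ _ (fun _ _ => Iff.rfl) (fun _ _ => Iff.rfl)
        have horig := hmofs.2 i j hij a b
        have hflip : ∀ x y : Fin 2,
            (C.filter fun p => F i p.1 p.2 = x ∧ F ⟨0, hk⟩ p.1 p.2 = y) =
            (C.filter fun p => F ⟨0, hk⟩ p.1 p.2 = y ∧ F i p.1 p.2 = x) :=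
          fun x y => Finset.filter_congr fun p _ => and_comm
        have hsw : (C.filter fun p => F i p.1 p.2 = a ∧ F j p.1 p.2 = 1 - b).card =
            (C.filter fun p => F i p.1 p.2 = a ∧ F j p.1 p.2 = b).card := by
          have t1 : (C.filter fun p => F i p.1 p.2 = a ∧ F j p.1 p.2 = 1 - b) =
              (C.filter fun p => F i p.1 p.2 = a ∧ F ⟨0, hk⟩ p.1 p.2 = (1 - b) - ej) :=
            Finset.filter_congr fun p hp => by
              rw [hej p hp]; exact and_congr_right' (fadd ej _ _)
          have t2 : (C.filter fun p => F i p.1 p.2 = a ∧ F j p.1 p.2 = b) =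
              (C.filter fun p => F i p.1 p.2 = a ∧ F ⟨0, hk⟩ p.1 p.2 = b - ej) :=
            Finset.filter_congr fun p hp => by
              rw [hej p hp]; exact and_congr_right' (fadd ej _ _)
          rw [t1, t2, hflip, hflip]
          exact key i hPi a ((1 - b) - ej) (b - ej)
        omega
      · -- neither switched
        have hfi : switchOn n k F ⟨0, hk⟩ C i = F i :=
          funext fun r => funext fun c => hGid i hPi r c
        have hfj : switchOn n k F ⟨0, hk⟩ C j = F j :=
          funext fun r => funext fun c => hGid j hPj r c
        rw [hfi, hfj]
        exact hmofs.2 i j hij a b
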